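/- Let F be a field of characteristic zero, let X be an n-element set, let Y = {y_1,...,y_m} be an m-element set, and let w_1,...,w_m be indeterminates; set W(f) = ∏_{x∈X} w_{f(x)} for f : X → Y and w̃ = (∑_{i=1}^m w_i, ∑_{i=1}^m w_i^2, ..., ∑_{i=1}^m w_i^n). For a permutation σ of X, let F_σ = {f : X → Y : f(x^σ) = f(x) for every x ∈ X} be the set of functions constant on each cycle of σ. Then ∑_{f∈F_σ} W(f) = Z(σ, w̃) in F[w_1,...,w_m]. -/
import Mathlib


open Finset

open scoped Classical

noncomputable section

/-- `cycleCount σ i` is the number of cycles of length `i` in the cycle decomposition of the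
permutation `σ` (fixed points are counted as cycles of length `1`). -/
def cycleCount {X : Type*} [Fintype X] [DecidableEq X] (σ : Equiv.Perm X) (i : ℕ) : ℕ :=
  if i = 1 then Fintype.card X - σ.support.card else σ.cycleType.count i

/-- `Zmon n σ t = t₁^{c₁(σ)} ⋯ t_n^{c_n(σ)}`, the monomial of the cycle index polynomial
associated to `σ`, evaluated at `t = (t₁, …, t_n)`. -/
def Zmon {X : Type*} [Fintype X] [DecidableEq X] {R : Type*} [CommSemiring R] (n : ℕ)
    (σ : Equiv.Perm X) (t : Fin n → R) : R :=
  ∏ i : Fin n, t i ^ cycleCount σ (i.1 + 1)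

set_option linter.unusedSectionVars false


namespace CycleCountAux

def scSetoid {X : Type*} (σ : Equiv.Perm X) : Setoid X :=
  ⟨σ.SameCycle, ⟨fun x => Equiv.Perm.SameCycle.refl σ x, fun h => h.symm, fun h h' => h.trans h'⟩⟩

variable {X : Type*} [Fintype X] [DecidableEq X] (σ : Equiv.Perm X)

abbrev Orb := Quotient (scSetoid σ)

lemma mk_eq_mk {x y : X} :
    Quotient.mk (scSetoid σ) x = Quotient.mk (scSetoid σ) y ↔ σ.SameCycle x y := by
  rw [Quotient.eq]; rfl

def orbSize (q : Orb σ) : ℕ := (univ.filter (fun x => Quotient.mk (scSetoid σ) x = q)).card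

lemma sameCycle_out (x : X) : σ.SameCycle x ((Quotient.mk (scSetoid σ) x).out) :=
  ((mk_eq_mk σ).mp (Quotient.out_eq _)).symm

lemma apply_pow_eq {Y : Type*} (f : X → Y) (hf : ∀ x, f (σ x) = f x) :
    ∀ (j : ℕ) (x : X), f ((σ ^ j) x) = f x
  | 0, x => by simp
  | j + 1, x => by
      rw [pow_succ, Equiv.Perm.mul_apply, apply_pow_eq f hf j (σ x), hf]

lemma eq_of_sameCycle {Y : Type*} (f : X → Y) (hf : ∀ x, f (σ x) = f x) {x y : X}
    (h : σ.SameCycle x y) : f x = f y := by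
  obtain ⟨i, -, -, hi⟩ := h.exists_pow_eq σ
  rw [← hi, apply_pow_eq σ f hf]

lemma orbSize_eq_one_iff (x : X) :
    orbSize σ (Quotient.mk (scSetoid σ) x) = 1 ↔ σ x = x := by
  constructor
  · intro h
    have hle : (univ.filter (fun y => Quotient.mk (scSetoid σ) y = Quotient.mk (scSetoid σ) x)).card ≤ 1 :=
      h.le
    have hx : x ∈ univ.filter (fun y => Quotient.mk (scSetoid σ) y = Quotient.mk (scSetoid σ) x) := by
      simp only [mem_filter, mem_univ, true_and]
    have hsx : σ x ∈ univ.filter (fun y => Quotient.mk (scSetoid σ) y = Quotient.mk (scSetoid σ) x) := by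
      simp only [mem_filter, mem_univ, true_and, mk_eq_mk]
      exact (Equiv.Perm.sameCycle_apply_left).mpr (Equiv.Perm.SameCycle.refl σ x)
    exact Finset.card_le_one.mp hle _ hsx _ hx
  · intro h
    have : (univ.filter (fun y => Quotient.mk (scSetoid σ) y = Quotient.mk (scSetoid σ) x)) = {x} := by
      ext y
      simp only [mem_filter, mem_univ, true_and, mk_eq_mk, mem_singleton]
      constructor
      · intro h'
        obtain ⟨i, hi⟩ := h'.symm
        rw [← hi, Equiv.Perm.zpow_apply_eq_self_of_apply_eq_self h]
      · rintro rfl; exact Equiv.Perm.SameCycle.refl σ y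
    rw [orbSize, this, Finset.card_singleton]

lemma fiber_eq_support_cycleOf {x : X} (hx : x ∈ σ.support) :
    (univ.filter (fun y => Quotient.mk (scSetoid σ) y = Quotient.mk (scSetoid σ) x))
      = (σ.cycleOf x).support := by
  ext y
  simp only [mem_filter, mem_univ, true_and, mk_eq_mk, Equiv.Perm.mem_support_cycleOf_iff]
  exact ⟨fun h => ⟨h.symm, hx⟩, fun h => h.1.symm⟩

lemma orbSize_eq_card_support_cycleOf {x : X} (hx : x ∈ σ.support) :
    orbSize σ (Quotient.mk (scSetoid σ) x) = (σ.cycleOf x).support.card := by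
  rw [orbSize, fiber_eq_support_cycleOf σ hx]

lemma orbSize_pos (q : Orb σ) : 1 ≤ orbSize σ q := by
  rw [Nat.succ_le_iff, orbSize, Finset.card_pos]
  exact ⟨q.out, by simp [Quotient.out_eq]⟩

lemma orbSize_le (q : Orb σ) : orbSize σ q ≤ Fintype.card X :=
  le_trans (Finset.card_filter_le _ _) (le_of_eq (Finset.card_univ))

lemma out_mem_support {q : Orb σ} (hq : orbSize σ q ≠ 1) : q.out ∈ σ.support := by
  rw [Equiv.Perm.mem_support]
  intro h
  apply hq
  have := (orbSize_eq_one_iff σ q.out).mpr h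
  rwa [Quotient.out_eq] at this

lemma count_one :
    (univ.filter (fun q : Orb σ => orbSize σ q = 1)).card
      = Fintype.card X - σ.support.card := by
  have : (univ.filter (fun q : Orb σ => orbSize σ q = 1)).card = σ.supportᶜ.card := by
    refine Finset.card_bij (fun q _ => q.out) ?_ ?_ ?_
    · intro q hq
      simp only [mem_filter, mem_univ, true_and] at hq
      simp only [Finset.mem_compl, Equiv.Perm.mem_support, not_not]
      have := (orbSize_eq_one_iff σ q.out)
      rw [Quotient.out_eq] at this
      exact this.mp hq
    · intro q₁ _ q₂ _ h
      have h' : q₁.out = q₂.out := h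
      rw [← Quotient.out_eq q₁, ← Quotient.out_eq q₂, h']
    · intro x hx
      simp only [Finset.mem_compl, Equiv.Perm.mem_support, not_not] at hx
      refine ⟨Quotient.mk (scSetoid σ) x, ?_, ?_⟩
      · simp only [mem_filter, mem_univ, true_and]
        exact (orbSize_eq_one_iff σ x).mpr hx
      · show (Quotient.mk (scSetoid σ) x).out = x
        obtain ⟨i, hi⟩ := sameCycle_out σ x
        rw [← hi, Equiv.Perm.zpow_apply_eq_self_of_apply_eq_self hx]
  rw [this, Finset.card_compl]

lemma count_ge_two {k : ℕ} (hk : k ≠ 1) :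
    (univ.filter (fun q : Orb σ => orbSize σ q = k)).card = σ.cycleType.count k := by
  have hcount : σ.cycleType.count k
      = (σ.cycleFactorsFinset.filter (fun c => c.support.card = k)).card := by
    rw [Equiv.Perm.cycleType_def, Multiset.count_map, Finset.card_def, Finset.filter_val]
    exact congrArg Multiset.card
      (Multiset.filter_congr (fun x _ => by simp [eq_comm, Function.comp]))
  rw [hcount]
  refine Finset.card_bij (fun q _ => σ.cycleOf q.out) ?_ ?_ ?_
  · intro q hq
    simp only [mem_filter, mem_univ, true_and] at hq
    have hsupp : q.out ∈ σ.support := out_mem_support σ (hq ▸ hk)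
    refine Finset.mem_filter.mpr ⟨?_, ?_⟩
    · exact (Equiv.Perm.cycleOf_mem_cycleFactorsFinset_iff).mpr hsupp
    · have := orbSize_eq_card_support_cycleOf σ hsupp
      rw [Quotient.out_eq] at this
      rw [← this, hq]
  · intro q₁ hq₁ q₂ hq₂ h
    simp only [mem_filter, mem_univ, true_and] at hq₁ hq₂
    have h₁ : q₁.out ∈ σ.support := out_mem_support σ (hq₁ ▸ hk)
    have h₂ : q₂.out ∈ σ.support := out_mem_support σ (hq₂ ▸ hk)
    have h' : σ.cycleOf q₁.out = σ.cycleOf q₂.out := h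
    have hmem : q₂.out ∈ (σ.cycleOf q₁.out).support := by
      rw [h']
      exact Equiv.Perm.mem_support_cycleOf_iff.mpr ⟨Equiv.Perm.SameCycle.refl σ _, h₂⟩
    have hsc : σ.SameCycle q₁.out q₂.out :=
      (Equiv.Perm.mem_support_cycleOf_iff.mp hmem).1
    rw [← Quotient.out_eq q₁, ← Quotient.out_eq q₂]
    exact (mk_eq_mk σ).mpr hsc
  · intro c hc
    simp only [mem_filter] at hc
    obtain ⟨hcf, hck⟩ := hc
    have hcycle : c.IsCycle := (Equiv.Perm.mem_cycleFactorsFinset_iff.mp hcf).1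
    obtain ⟨x, hx⟩ := hcycle.nonempty_support
    have hceq : c = σ.cycleOf x := Equiv.Perm.cycle_is_cycleOf hx hcf
    have hxsupp : x ∈ σ.support := by
      have : x ∈ (σ.cycleOf x).support := hceq ▸ hx
      exact (Equiv.Perm.mem_support_cycleOf_iff.mp this).2
    refine ⟨Quotient.mk (scSetoid σ) x, ?_, ?_⟩
    · simp only [mem_filter, mem_univ, true_and]
      rw [orbSize_eq_card_support_cycleOf σ hxsupp, ← hceq, hck]
    · show σ.cycleOf ((Quotient.mk (scSetoid σ) x).out) = c
      have hsc : σ.SameCycle x ((Quotient.mk (scSetoid σ) x).out) := sameCycle_out σ x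
      rw [← hsc.cycleOf_eq, ← hceq]

lemma card_orb_eq_cycleCount {k : ℕ} (hk : 1 ≤ k) :
    (univ.filter (fun q : Orb σ => orbSize σ q = k)).card = cycleCount σ k := by
  by_cases h1 : k = 1
  · subst h1
    rw [cycleCount, if_pos rfl, count_one]
  · rw [cycleCount, if_neg h1, count_ge_two σ h1]

end CycleCountAux

open CycleCountAux in
/-- **Key lemma.** For a permutation `σ` of an `n`-element set `X`, the sum of the weights
`W(f) = ∏_{x ∈ X} w_{f(x)}` over all functions `f : X → Y` that are constant on each cycle
of `σ` (i.e. `f(x^σ) = f(x)` for all `x`) equals `Z(σ, w̃)`. -/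
theorem sum_weights_fixed_functions {F : Type*} [Field F] [CharZero F] (n m : ℕ)
    (X : Type*) [Fintype X] [DecidableEq X] (hX : Fintype.card X = n)
    (σ : Equiv.Perm X) :
    ∑ f ∈ univ.filter (fun f : X → Fin m => ∀ x : X, f (σ x) = f x),
        ∏ x, (MvPolynomial.X (f x) : MvPolynomial (Fin m) F)
      = Zmon n σ
          (fun j => ∑ i : Fin m, (MvPolynomial.X i : MvPolynomial (Fin m) F) ^ (j.1 + 1)) := by
  classical
  subst hX
  -- Step 1: reindex the sum by functions on the set of orbits.
  have step1 :
      ∑ f ∈ univ.filter (fun f : X → Fin m => ∀ x : X, f (σ x) = f x),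
          ∏ x, (MvPolynomial.X (f x) : MvPolynomial (Fin m) F)
        = ∑ g : Orb σ → Fin m, ∏ q : Orb σ,
            (MvPolynomial.X (g q) : MvPolynomial (Fin m) F) ^ orbSize σ q := by
    refine Finset.sum_nbij' (fun f q => f q.out)
      (fun g x => g (Quotient.mk (scSetoid σ) x)) ?_ ?_ ?_ ?_ ?_
    · intro f _; exact mem_univ _
    · intro g _
      simp only [mem_filter, mem_univ, true_and]
      intro x
      congr 1
      exact (mk_eq_mk σ).mpr ((Equiv.Perm.sameCycle_apply_left).mpr
        (Equiv.Perm.SameCycle.refl σ x))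
    · intro f hf
      simp only [mem_filter, mem_univ, true_and] at hf
      funext x
      exact (eq_of_sameCycle σ f hf (sameCycle_out σ x)).symm
    · intro g _
      funext q
      simp only [Quotient.out_eq]
    · intro f hf
      simp only [mem_filter, mem_univ, true_and] at hf
      have h1 : ∀ x : X,
          (MvPolynomial.X (f x) : MvPolynomial (Fin m) F)
            = MvPolynomial.X (f ((Quotient.mk (scSetoid σ) x).out)) := by
        intro x
        rw [eq_of_sameCycle σ f hf (sameCycle_out σ x)]
      calc ∏ x, (MvPolynomial.X (f x) : MvPolynomial (Fin m) F)
          = ∏ x, (MvPolynomial.X (f ((Quotient.mk (scSetoid σ) x).out))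
              : MvPolynomial (Fin m) F) := Finset.prod_congr rfl fun x _ => h1 x
        _ = ∏ q : Orb σ, ∏ x ∈ univ.filter (fun x => Quotient.mk (scSetoid σ) x = q),
              (MvPolynomial.X (f q.out) : MvPolynomial (Fin m) F) :=
            (Finset.prod_fiberwise' univ (fun x => Quotient.mk (scSetoid σ) x)
              (fun q => (MvPolynomial.X (f q.out) : MvPolynomial (Fin m) F))).symm
        _ = ∏ q : Orb σ, (MvPolynomial.X (f q.out) : MvPolynomial (Fin m) F)
              ^ orbSize σ q := by
            refine Finset.prod_congr rfl fun q _ => ?_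
            rw [Finset.prod_const]
            rfl
  rw [step1]
  -- Step 2: exchange sum and product.
  have step2 :
      ∑ g : Orb σ → Fin m, ∏ q : Orb σ,
          (MvPolynomial.X (g q) : MvPolynomial (Fin m) F) ^ orbSize σ q
        = ∏ q : Orb σ, ∑ i : Fin m,
            (MvPolynomial.X i : MvPolynomial (Fin m) F) ^ orbSize σ q := by
    rw [Finset.prod_univ_sum]
    rw [Fintype.piFinset_univ]
  rw [step2]
  -- Step 3: group the orbits by their sizes.
  have horb : ∀ q : Orb σ, orbSize σ q - 1 < Fintype.card X := fun q =>
    lt_of_lt_of_le (Nat.sub_lt (orbSize_pos σ q) one_pos) (orbSize_le σ q)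
  set gmap : Orb σ → Fin (Fintype.card X) := fun q => ⟨orbSize σ q - 1, horb q⟩ with hgmap
  have step3 :
      ∏ q : Orb σ, ∑ i : Fin m,
          (MvPolynomial.X i : MvPolynomial (Fin m) F) ^ orbSize σ q
        = ∏ j : Fin (Fintype.card X),
            (∑ i : Fin m, (MvPolynomial.X i : MvPolynomial (Fin m) F) ^ (j.1 + 1))
              ^ (univ.filter (fun q : Orb σ => gmap q = j)).card := by
    have key : ∀ q : Orb σ,
        (∑ i : Fin m, (MvPolynomial.X i : MvPolynomial (Fin m) F) ^ orbSize σ q)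
          = ∑ i : Fin m, (MvPolynomial.X i : MvPolynomial (Fin m) F) ^ ((gmap q).1 + 1) := by
      intro q
      have h : (gmap q).1 + 1 = orbSize σ q := Nat.sub_add_cancel (orbSize_pos σ q)
      rw [h]
    calc ∏ q : Orb σ, ∑ i : Fin m,
            (MvPolynomial.X i : MvPolynomial (Fin m) F) ^ orbSize σ q
        = ∏ q : Orb σ, ∑ i : Fin m,
            (MvPolynomial.X i : MvPolynomial (Fin m) F) ^ ((gmap q).1 + 1) :=
          Finset.prod_congr rfl fun q _ => key q
      _ = ∏ j : Fin (Fintype.card X), ∏ q ∈ univ.filter (fun q : Orb σ => gmap q = j),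
            (∑ i : Fin m, (MvPolynomial.X i : MvPolynomial (Fin m) F) ^ (j.1 + 1)) :=
          (Finset.prod_fiberwise' (univ : Finset (Orb σ)) gmap
            (fun j : Fin (Fintype.card X) =>
              ∑ i : Fin m, (MvPolynomial.X i : MvPolynomial (Fin m) F) ^ (j.1 + 1))).symm
      _ = ∏ j : Fin (Fintype.card X),
            (∑ i : Fin m, (MvPolynomial.X i : MvPolynomial (Fin m) F) ^ (j.1 + 1))
              ^ (univ.filter (fun q : Orb σ => gmap q = j)).card :=
          Finset.prod_congr rfl fun j _ => Finset.prod_const _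
  rw [step3, Zmon]
  refine Finset.prod_congr rfl fun j _ => ?_
  congr 1
  have hfilter : (univ.filter (fun q : Orb σ => gmap q = j))
      = (univ.filter (fun q : Orb σ => orbSize σ q = j.1 + 1)) := by
    refine Finset.filter_congr fun q _ => ?_
    rw [hgmap, Fin.ext_iff]
    show orbSize σ q - 1 = j.1 ↔ orbSize σ q = j.1 + 1
    rw [Nat.sub_eq_iff_eq_add (orbSize_pos σ q)]
  rw [hfilter, card_orb_eq_cycleCount σ (Nat.le_add_left 1 j.1)]
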